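/- Let (ε_N) be a sequence in [0,1) with ε_N → 0 and let K ⊆ ℝ be compact. Then the convergence of T_N^ε[a](z) = exp(i·ε_N·z)·(cos(z(1−ε_N)/N) + i·a·sin(z(1−ε_N)/N))^N to exp(iaz) is uniform jointly in a ∈ K and z in any compact subset of ℂ. -/

import Mathlib

open Complex Filter Finset

lemma aux_pow_sub_pow (u v : ℂ) (M : ℝ) (n : ℕ) (hu : ‖u‖ ≤ M) (hv : ‖v‖ ≤ M) :
    ‖u ^ n - v ^ n‖ ≤ n * M ^ (n - 1) * ‖u - v‖ := by
  have hM : 0 ≤ M := le_trans (norm_nonneg u) hu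
  rw [← geom_sum₂_mul, norm_mul]
  have hsum : ‖∑ i ∈ Finset.range n, u ^ i * v ^ (n - 1 - i)‖ ≤ n * M ^ (n - 1) := by
    calc ‖∑ i ∈ Finset.range n, u ^ i * v ^ (n - 1 - i)‖
        ≤ ∑ i ∈ Finset.range n, ‖u ^ i * v ^ (n - 1 - i)‖ :=
          norm_sum_le _ _
      _ ≤ ∑ _i ∈ Finset.range n, M ^ (n - 1) := by
          apply Finset.sum_le_sum
          intro i hi
          rw [norm_mul, norm_pow, norm_pow]
          calc ‖u‖ ^ i * ‖v‖ ^ (n - 1 - i)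
              ≤ M ^ i * M ^ (n - 1 - i) := by gcongr
            _ = M ^ (n - 1) := by
                rw [← pow_add]
                congr 1
                have := Finset.mem_range.1 hi
                omega
      _ = n * M ^ (n - 1) := by simp [Finset.sum_const, nsmul_eq_mul]
  exact mul_le_mul_of_nonneg_right hsum (norm_nonneg _)

lemma aux_key (a : ℝ) (w : ℂ) (hw : ‖w‖ ≤ 1) (haw : |a| * ‖w‖ ≤ 1) :
    ‖(Complex.cos w + Complex.I * a * Complex.sin w) - Complex.exp (Complex.I * a * w)‖
      ≤ (1 + |a|) ^ 2 * ‖w‖ ^ 2 := by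
  have key : (Complex.cos w + Complex.I * a * Complex.sin w) - Complex.exp (Complex.I * a * w)
      = ((1 + (a : ℂ)) / 2) * (Complex.exp (w * Complex.I) - 1 - w * Complex.I)
        + ((1 - (a : ℂ)) / 2) * (Complex.exp (-w * Complex.I) - 1 - (-w * Complex.I))
        - (Complex.exp (Complex.I * a * w) - 1 - Complex.I * a * w) := by
    rw [Complex.exp_mul_I, Complex.exp_mul_I, Complex.cos_neg, Complex.sin_neg]
    ring
  rw [key]
  have h1 : ‖Complex.exp (w * Complex.I) - 1 - w * Complex.I‖ ≤ ‖w‖ ^ 2 := by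
    have := Complex.norm_exp_sub_one_sub_id_le (x := w * Complex.I) (by simpa using hw)
    simpa using this
  have h2 : ‖Complex.exp (-w * Complex.I) - 1 - (-w * Complex.I)‖ ≤ ‖w‖ ^ 2 := by
    have := Complex.norm_exp_sub_one_sub_id_le (x := -w * Complex.I) (by simpa using hw)
    simpa using this
  have h3 : ‖Complex.exp (Complex.I * a * w) - 1 - Complex.I * a * w‖
      ≤ (|a| * ‖w‖) ^ 2 := by
    have habs : ‖Complex.I * a * w‖ = |a| * ‖w‖ := by
      simp [norm_mul, Complex.norm_real, Real.norm_eq_abs]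
    have := Complex.norm_exp_sub_one_sub_id_le (x := Complex.I * a * w) (by rw [habs]; exact haw)
    rwa [habs] at this
  have hc1 : ‖(1 + (a : ℂ)) / 2‖ ≤ (1 + |a|) / 2 := by
    rw [norm_div]
    simp only [Complex.norm_two]
    gcongr
    calc ‖1 + (a : ℂ)‖ ≤ ‖1‖ + ‖(a : ℂ)‖ := norm_add_le _ _
      _ = 1 + |a| := by simp [Complex.norm_real, Real.norm_eq_abs]
  have hc2 : ‖(1 - (a : ℂ)) / 2‖ ≤ (1 + |a|) / 2 := by
    rw [norm_div]
    simp only [Complex.norm_two]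
    gcongr
    calc ‖1 - (a : ℂ)‖ ≤ ‖(1 : ℂ)‖ + ‖(a : ℂ)‖ := by
            simpa using norm_sub_le (1 : ℂ) (a : ℂ)
      _ = 1 + |a| := by simp [Complex.norm_real, Real.norm_eq_abs]
  have hw0 : 0 ≤ ‖w‖ := norm_nonneg w
  set X := ((1 + (a : ℂ)) / 2) * (Complex.exp (w * Complex.I) - 1 - w * Complex.I) with hX
  set Y := ((1 - (a : ℂ)) / 2) * (Complex.exp (-w * Complex.I) - 1 - (-w * Complex.I)) with hY
  set Z := Complex.exp (Complex.I * a * w) - 1 - Complex.I * a * w with hZ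
  calc ‖X + Y - Z‖
      ≤ ‖X + Y‖ + ‖Z‖ :=
        by simpa using norm_sub_le (X + Y) Z
    _ ≤ ‖X‖ + ‖Y‖ + ‖Z‖ := by
        gcongr; exact norm_add_le _ _
    _ ≤ (1 + |a|) / 2 * ‖w‖ ^ 2 + (1 + |a|) / 2 * ‖w‖ ^ 2
        + (|a| * ‖w‖) ^ 2 := by
        rw [hX, hY, norm_mul, norm_mul]
        gcongr
    _ ≤ (1 + |a|) ^ 2 * ‖w‖ ^ 2 := by
        have ha0 : 0 ≤ |a| := abs_nonneg a
        nlinarith [sq_nonneg (‖w‖), sq_nonneg |a|]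

set_option maxHeartbeats 1000000 in
theorem stmt3 (ε : ℕ → ℝ) (hε : ∀ N, ε N ∈ Set.Ico (0 : ℝ) 1)
    (hε0 : Filter.Tendsto ε Filter.atTop (nhds 0))
    (K : Set ℝ) (hK : IsCompact K) (Kz : Set ℂ) (hKz : IsCompact Kz) :
    TendstoUniformlyOn
      (fun (N : ℕ) (p : ℝ × ℂ) =>
        Complex.exp (Complex.I * (ε N : ℂ) * p.2) *
          (Complex.cos (p.2 * (1 - (ε N : ℂ)) / (N : ℂ)) +
              Complex.I * (p.1 : ℂ) * Complex.sin (p.2 * (1 - (ε N : ℂ)) / (N : ℂ))) ^ N)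
      (fun p => Complex.exp (Complex.I * (p.1 : ℂ) * p.2)) Filter.atTop (K ×ˢ Kz) := by
  obtain ⟨A₀, hA₀⟩ := hK.isBounded.exists_norm_le
  obtain ⟨R₀, hR₀⟩ := hKz.isBounded.exists_norm_le
  set A := max A₀ 0 with hAdef
  set R := max R₀ 0 with hRdef
  have hA : ∀ a ∈ K, |a| ≤ A := fun a ha => le_max_of_le_left (hA₀ a ha)
  have hR : ∀ z ∈ Kz, ‖z‖ ≤ R := fun z hz =>
    le_max_of_le_left (by simpa using hR₀ z hz)
  have hA0 : (0 : ℝ) ≤ A := le_max_right _ _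
  have hR0 : (0 : ℝ) ≤ R := le_max_right _ _
  set C := (1 + A) ^ 2 * R ^ 2 with hCdef
  have hC0 : 0 ≤ C := by positivity
  set D := A * R + C with hDdef
  have hD0 : 0 ≤ D := by positivity
  set c1 := Real.exp (A * R) * (2 * (R * (1 + A))) with hc1def
  set c2 := Real.exp (R + D) * C with hc2def
  clear_value C D c1 c2
  rw [Metric.tendstoUniformlyOn_iff]
  intro δ hδ
  have hb : Tendsto (fun N : ℕ => c1 * ε N + c2 / N) atTop (nhds 0) := by
    have h1 := hε0.const_mul c1
    have h2 := tendsto_const_div_atTop_nhds_zero_nat c2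
    simpa using h1.add h2
  have hev1 : ∀ᶠ N : ℕ in atTop, (A + 1) * R ≤ (N : ℝ) :=
    tendsto_natCast_atTop_atTop.eventually_ge_atTop ((A + 1) * R)
  have htmp : Tendsto (fun N => ε N * (R * (1 + A))) atTop (nhds 0) := by
    simpa using hε0.mul_const (R * (1 + A))
  have hev2 : ∀ᶠ N : ℕ in atTop, ε N * (R * (1 + A)) < 1 :=
    htmp.eventually (gt_mem_nhds one_pos)
  have hev3 : ∀ᶠ N : ℕ in atTop, c1 * ε N + c2 / N < δ :=
    hb.eventually (gt_mem_nhds hδ)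
  filter_upwards [hev1, hev2, hev3, eventually_ge_atTop 1] with N hN2 hN3 hbN hN1
  intro p hp
  obtain ⟨ha, hz⟩ := hp
  obtain ⟨a, z⟩ := p
  simp only at ha hz ⊢
  have haA : |a| ≤ A := hA a ha
  have hzR : ‖z‖ ≤ R := hR z hz
  have he0 : 0 ≤ ε N := (hε N).1
  have he1 : ε N < 1 := (hε N).2
  have hNpos : (0 : ℝ) < (N : ℝ) := by exact_mod_cast hN1
  have hNne : (N : ℂ) ≠ 0 := by exact_mod_cast Nat.cast_ne_zero.mpr (by omega)
  set e := ε N with hedef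
  set w := z * (1 - (e : ℂ)) / (N : ℂ) with hwdef
  have habs1e : ‖1 - (e : ℂ)‖ = 1 - e := by
    rw [show (1 : ℂ) - (e : ℂ) = ((1 - e : ℝ) : ℂ) by push_cast; ring, Complex.norm_real, Real.norm_eq_abs]
    rw [_root_.abs_of_nonneg (by linarith : (0:ℝ) ≤ 1 - e)]
  have hwa : ‖w‖ ≤ R / N := by
    rw [hwdef, norm_div, norm_mul, habs1e]
    have : ‖(N : ℂ)‖ = (N : ℝ) := by
      rw [show ((N : ℂ)) = ((N : ℝ) : ℂ) by push_cast; ring, Complex.norm_real, Real.norm_eq_abs,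
        _root_.abs_of_nonneg hNpos.le]
    rw [this]
    gcongr
    calc ‖z‖ * (1 - e) ≤ R * 1 := by
          apply mul_le_mul hzR (by linarith) (by linarith) hR0
      _ = R := mul_one R
  have hRN1 : R / N ≤ 1 := by
    rw [div_le_one hNpos]
    nlinarith
  have hw1 : ‖w‖ ≤ 1 := hwa.trans hRN1
  have hw0 : (0:ℝ) ≤ ‖w‖ := norm_nonneg w
  have hw2 : |a| * ‖w‖ ≤ 1 := by
    have h1 : |a| * ‖w‖ ≤ A * (R / N) := mul_le_mul haA hwa hw0 hA0
    have h2 : A * (R / N) ≤ 1 := by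
      rw [mul_div_assoc', div_le_one hNpos]
      nlinarith
    exact h1.trans h2
  set u := Complex.cos w + Complex.I * (a : ℂ) * Complex.sin w with hudef
  set v := Complex.exp (Complex.I * (a : ℂ) * w) with hvdef
  have huv : ‖u - v‖ ≤ C / N ^ 2 := by
    calc ‖u - v‖ ≤ (1 + |a|) ^ 2 * ‖w‖ ^ 2 := aux_key a w hw1 hw2
      _ ≤ (1 + A) ^ 2 * (R / N) ^ 2 := by
          have h1 : (1 + |a|) ^ 2 ≤ (1 + A) ^ 2 := by nlinarith [abs_nonneg a]
          have h2 : ‖w‖ ^ 2 ≤ (R / N) ^ 2 := by nlinarith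
          apply mul_le_mul h1 h2 (by positivity) (by positivity)
      _ = C / N ^ 2 := by rw [hCdef]; field_simp
  have hIaw : ‖Complex.I * (a : ℂ) * w‖ = |a| * ‖w‖ := by
    rw [norm_mul, norm_mul, Complex.norm_I, one_mul, Complex.norm_real, Real.norm_eq_abs]
  have hv1 : ‖v‖ ≤ Real.exp (A * R / N) := by
    rw [hvdef, Complex.norm_exp]
    apply Real.exp_le_exp.2
    calc (Complex.I * (a : ℂ) * w).re ≤ ‖Complex.I * (a : ℂ) * w‖ :=
          Complex.re_le_norm _
      _ = |a| * ‖w‖ := hIaw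
      _ ≤ A * (R / N) := mul_le_mul haA hwa hw0 hA0
      _ = A * R / N := by ring
  have hARN : A * R / N ≤ D / N := by gcongr; rw [hDdef]; linarith
  have hvM : ‖v‖ ≤ Real.exp (D / N) := hv1.trans (Real.exp_le_exp.2 hARN)
  have hexp1 : (1 : ℝ) ≤ Real.exp (A * R / N) := Real.one_le_exp (by positivity)
  have huM : ‖u‖ ≤ Real.exp (D / N) := by
    have h1 : ‖u‖ ≤ ‖v‖ + C / N ^ 2 := by
      calc ‖u‖ = ‖v + (u - v)‖ := by congr 1; ring
        _ ≤ ‖v‖ + ‖u - v‖ := norm_add_le _ _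
        _ ≤ ‖v‖ + C / N ^ 2 := add_le_add_right huv _
    have hN1' : (1 : ℝ) ≤ (N : ℝ) := by exact_mod_cast hN1
    have hNsq : (N : ℝ) ≤ (N : ℝ) ^ 2 := by nlinarith
    have step1 : C / N ^ 2 ≤ C / N := div_le_div_of_nonneg_left hC0 hNpos hNsq
    have step2 : C / N ≤ Real.exp (A * R / N) * (C / N) :=
      le_mul_of_one_le_left (by positivity) hexp1
    have step4 : Real.exp (A * R / N) * (1 + C / N)
        ≤ Real.exp (A * R / N) * Real.exp (C / N) := by
      gcongr
      have := Real.add_one_le_exp (C / N)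
      linarith
    have step5 : Real.exp (A * R / N) * Real.exp (C / N) = Real.exp (D / N) := by
      rw [← Real.exp_add]
      congr 1
      rw [hDdef]
      ring
    calc ‖u‖ ≤ ‖v‖ + C / N ^ 2 := h1
      _ ≤ Real.exp (A * R / N) + C / N := by linarith [hv1]
      _ ≤ Real.exp (A * R / N) * (1 + C / N) := by
          have h := step2; nlinarith [Real.exp_pos (A * R / N)]
      _ ≤ Real.exp (D / N) := step4.trans step5.le
  have hpow : ‖u ^ N - v ^ N‖ ≤ Real.exp D * C / N := by
    have hMN : Real.exp (D / N) ^ (N - 1) ≤ Real.exp D := by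
      rw [← Real.exp_nat_mul]
      apply Real.exp_le_exp.2
      have hle : ((N - 1 : ℕ) : ℝ) ≤ (N : ℝ) := by exact_mod_cast Nat.sub_le N 1
      calc ((N - 1 : ℕ) : ℝ) * (D / N) ≤ (N : ℝ) * (D / N) := by
            apply mul_le_mul_of_nonneg_right hle (by positivity)
        _ = D := by field_simp
    calc ‖u ^ N - v ^ N‖
        ≤ N * Real.exp (D / N) ^ (N - 1) * ‖u - v‖ :=
          aux_pow_sub_pow u v (Real.exp (D / N)) N huM hvM
      _ ≤ N * Real.exp D * (C / N ^ 2) := by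
          rw [mul_assoc, mul_assoc]
          apply mul_le_mul_of_nonneg_left _ (by positivity : (0:ℝ) ≤ (N:ℝ))
          apply mul_le_mul hMN huv (norm_nonneg _) (Real.exp_nonneg _)
      _ = Real.exp D * C / N := by field_simp
  have hvN : v ^ N = Complex.exp (Complex.I * (a : ℂ) * (z * (1 - (e : ℂ)))) := by
    rw [hvdef, ← Complex.exp_nat_mul]
    congr 1
    rw [hwdef]
    field_simp
  rw [Complex.dist_eq]
  have key1 : Complex.exp (Complex.I * (e : ℂ) * z) * v ^ N
      = Complex.exp (Complex.I * (a : ℂ) * z)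
        * Complex.exp (Complex.I * (e : ℂ) * z * (1 - (a : ℂ))) := by
    rw [hvN, ← Complex.exp_add, ← Complex.exp_add]
    congr 1
    ring
  have h1a : ‖1 - (a : ℂ)‖ ≤ 1 + A := by
    calc ‖1 - (a : ℂ)‖ ≤ 1 + |a| := by
          simpa using norm_sub_le (1 : ℂ) ((a : ℝ) : ℂ)
      _ ≤ 1 + A := by linarith
  have habsx : ‖Complex.I * (e : ℂ) * z * (1 - (a : ℂ))‖ ≤ e * (R * (1 + A)) := by
    rw [norm_mul, norm_mul, norm_mul, Complex.norm_I, one_mul, Complex.norm_real, Real.norm_eq_abs,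
      _root_.abs_of_nonneg he0]
    calc e * ‖z‖ * ‖1 - (a : ℂ)‖ ≤ e * R * (1 + A) := by
          apply mul_le_mul _ h1a (norm_nonneg _) (by positivity)
          exact mul_le_mul_of_nonneg_left hzR he0
      _ = e * (R * (1 + A)) := by ring
  have hexpIaz : ‖Complex.exp (Complex.I * (a : ℂ) * z)‖ ≤ Real.exp (A * R) := by
    rw [Complex.norm_exp]
    apply Real.exp_le_exp.2
    calc (Complex.I * (a : ℂ) * z).re ≤ ‖Complex.I * (a : ℂ) * z‖ :=
          Complex.re_le_norm _
      _ = |a| * ‖z‖ := by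
          rw [norm_mul, norm_mul, Complex.norm_I, one_mul, Complex.norm_real, Real.norm_eq_abs]
      _ ≤ A * R := mul_le_mul haA hzR (norm_nonneg z) hA0
  have hexpIez : ‖Complex.exp (Complex.I * (e : ℂ) * z)‖ ≤ Real.exp R := by
    rw [Complex.norm_exp]
    apply Real.exp_le_exp.2
    calc (Complex.I * (e : ℂ) * z).re ≤ ‖Complex.I * (e : ℂ) * z‖ :=
          Complex.re_le_norm _
      _ = e * ‖z‖ := by
          rw [norm_mul, norm_mul, Complex.norm_I, one_mul, Complex.norm_real, Real.norm_eq_abs,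
            _root_.abs_of_nonneg he0]
      _ ≤ 1 * R := mul_le_mul he1.le hzR (norm_nonneg z) (by norm_num)
      _ = R := one_mul R
  have piece1 : ‖Complex.exp (Complex.I * (a : ℂ) * z)
        - Complex.exp (Complex.I * (e : ℂ) * z) * v ^ N‖
      ≤ Real.exp (A * R) * (2 * (e * (R * (1 + A)))) := by
    rw [key1]
    have heq : Complex.exp (Complex.I * (a : ℂ) * z)
        - Complex.exp (Complex.I * (a : ℂ) * z)
          * Complex.exp (Complex.I * (e : ℂ) * z * (1 - (a : ℂ)))
        = Complex.exp (Complex.I * (a : ℂ) * z)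
          * (1 - Complex.exp (Complex.I * (e : ℂ) * z * (1 - (a : ℂ)))) := by ring
    rw [heq, norm_mul]
    have hlt : ‖1 - Complex.exp (Complex.I * (e : ℂ) * z * (1 - (a : ℂ)))‖
        ≤ 2 * (e * (R * (1 + A))) := by
      rw [norm_sub_rev]
      calc ‖Complex.exp (Complex.I * (e : ℂ) * z * (1 - (a : ℂ))) - 1‖
          ≤ 2 * ‖Complex.I * (e : ℂ) * z * (1 - (a : ℂ))‖ :=
            Complex.norm_exp_sub_one_le (habsx.trans hN3.le)
        _ ≤ 2 * (e * (R * (1 + A))) := by linarith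
    exact mul_le_mul hexpIaz hlt (norm_nonneg _) (Real.exp_nonneg _)
  have piece2 : ‖Complex.exp (Complex.I * (e : ℂ) * z) * v ^ N
        - Complex.exp (Complex.I * (e : ℂ) * z) * u ^ N‖
      ≤ Real.exp (R + D) * C / N := by
    have heq : Complex.exp (Complex.I * (e : ℂ) * z) * v ^ N
        - Complex.exp (Complex.I * (e : ℂ) * z) * u ^ N
        = Complex.exp (Complex.I * (e : ℂ) * z) * (v ^ N - u ^ N) := by ring
    rw [heq, norm_mul]
    calc ‖Complex.exp (Complex.I * (e : ℂ) * z)‖ * ‖v ^ N - u ^ N‖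
        ≤ Real.exp R * (Real.exp D * C / N) := by
          rw [norm_sub_rev]
          apply mul_le_mul hexpIez hpow (norm_nonneg _) (Real.exp_nonneg _)
      _ = Real.exp (R + D) * C / N := by rw [Real.exp_add]; ring
  calc ‖Complex.exp (Complex.I * (a : ℂ) * z)
        - Complex.exp (Complex.I * (e : ℂ) * z) * u ^ N‖
      ≤ ‖Complex.exp (Complex.I * (a : ℂ) * z)
          - Complex.exp (Complex.I * (e : ℂ) * z) * v ^ N‖
        + ‖Complex.exp (Complex.I * (e : ℂ) * z) * v ^ N
          - Complex.exp (Complex.I * (e : ℂ) * z) * u ^ N‖ :=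
        norm_sub_le_norm_sub_add_norm_sub _ _ _
    _ ≤ Real.exp (A * R) * (2 * (e * (R * (1 + A)))) + Real.exp (R + D) * C / N :=
        add_le_add piece1 piece2
    _ = c1 * e + c2 / N := by rw [hc1def, hc2def]; ring
    _ < δ := hbN
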